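/- Let x, y be nonzero vectors in ℂⁿ. There exists a skew-Hermitian matrix Δ ∈ ℂ^{n,n} with Δx = y if and only if x*y is purely imaginary. -/

import Mathlib

open Matrix

/-- There is a skew-Hermitian `Δ` with `Δx = y` iff `x*y` is purely imaginary. -/
theorem skewHermitian_mapping_exists {n : ℕ} (x y : Fin n → ℂ) (hx : x ≠ 0) (hy : y ≠ 0) :
    (∃ Δ : Matrix (Fin n) (Fin n) ℂ, Δᴴ = -Δ ∧ Δ.mulVec x = y) ↔ (star x ⬝ᵥ y).re = 0 := by
  constructor
  · rintro ⟨Δ, hskew, hmap⟩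
    set z : ℂ := star x ⬝ᵥ y with hz
    have h1 : (starRingEnd ℂ) z = -z := by
      have h2 : (starRingEnd ℂ) z = star y ⬝ᵥ x := by
        simp [hz, dotProduct, map_sum, mul_comm]
      rw [h2, ← hmap, star_mulVec, hskew]
      have h3 : star x ᵥ* (-Δ) ⬝ᵥ x = -(star x ⬝ᵥ Δ.mulVec x) := by
        rw [← dotProduct_mulVec, Matrix.neg_mulVec, dotProduct_neg]
      rw [h3, hmap, ← hz]
    have h4 := congrArg Complex.re h1
    simp at h4
    linarith
  · intro h
    set s : ℝ := ∑ i, Complex.normSq (x i) with hs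
    have hspos : 0 < s := by
      by_contra hcon
      push_neg at hcon
      have hnn : ∀ i ∈ Finset.univ, (0:ℝ) ≤ Complex.normSq (x i) := fun i _ =>
        Complex.normSq_nonneg _
      have hge : 0 ≤ s := Finset.sum_nonneg hnn
      have hse : s = 0 := le_antisymm hcon hge
      have hzero := (Finset.sum_eq_zero_iff_of_nonneg hnn).mp hse
      apply hx
      funext i
      exact Complex.normSq_eq_zero.mp (hzero i (Finset.mem_univ i))
    have hsne : (s:ℂ) ≠ 0 := by
      exact_mod_cast ne_of_gt hspos
    set c : ℂ := star y ⬝ᵥ x with hc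
    have hcconj : (starRingEnd ℂ) c = -c := by
      have h1 : (starRingEnd ℂ) c = star x ⬝ᵥ y := by
        simp [hc, dotProduct, map_sum, mul_comm]
      have h3 : c = (starRingEnd ℂ) (star x ⬝ᵥ y) := by
        simp [hc, dotProduct, map_sum, mul_comm]
      have h2 : star x ⬝ᵥ y = -c := by
        apply Complex.ext
        · simp [h, h3]
        · simp [h3]
      rw [h1, h2]
    refine ⟨fun i j => (y i * (starRingEnd ℂ) (x j) - x i * (starRingEnd ℂ) (y j)) / s
        + c * x i * (starRingEnd ℂ) (x j) / (s^2 : ℝ), ?_, ?_⟩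
    · ext i j
      show star ((y j * (starRingEnd ℂ) (x i) - x j * (starRingEnd ℂ) (y i)) / s
        + c * x j * (starRingEnd ℂ) (x i) / (s^2 : ℝ)) = -((y i * (starRingEnd ℂ) (x j)
        - x i * (starRingEnd ℂ) (y j)) / s + c * x i * (starRingEnd ℂ) (x j) / (s^2 : ℝ))
      simp only [conjTranspose_apply, Matrix.neg_apply, Complex.star_def, map_add, map_div₀,
        map_sub, _root_.map_mul, Complex.conj_conj, Complex.conj_ofReal, map_pow, hcconj]
      ring
    · funext i
      have hsum : ∑ j, (starRingEnd ℂ) (x j) * x j = (s:ℂ) := by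
        rw [hs]
        push_cast
        refine Finset.sum_congr rfl fun j _ => ?_
        rw [Complex.normSq_eq_conj_mul_self]
      have hcsum : ∑ j, (starRingEnd ℂ) (y j) * x j = c := by
        simp [hc, dotProduct]
      have key : ∀ j, ((y i * (starRingEnd ℂ) (x j) - x i * (starRingEnd ℂ) (y j)) / s
          + c * x i * (starRingEnd ℂ) (x j) / (s^2 : ℝ)) * x j =
          ((s:ℂ))⁻¹ * (y i * ((starRingEnd ℂ) (x j) * x j))
          - ((s:ℂ))⁻¹ * (x i * ((starRingEnd ℂ) (y j) * x j))
          + ((s:ℂ)^2)⁻¹ * (c * x i * ((starRingEnd ℂ) (x j) * x j)) := by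
        intro j
        push_cast
        field_simp
      show ∑ j, _ * x j = y i
      calc ∑ j, ((y i * (starRingEnd ℂ) (x j) - x i * (starRingEnd ℂ) (y j)) / s
          + c * x i * (starRingEnd ℂ) (x j) / (s^2 : ℝ)) * x j
          = ∑ j, (((s:ℂ))⁻¹ * (y i * ((starRingEnd ℂ) (x j) * x j))
          - ((s:ℂ))⁻¹ * (x i * ((starRingEnd ℂ) (y j) * x j))
          + ((s:ℂ)^2)⁻¹ * (c * x i * ((starRingEnd ℂ) (x j) * x j))) :=
            Finset.sum_congr rfl fun j _ => key j
        _ = ((s:ℂ))⁻¹ * (y i * ∑ j, (starRingEnd ℂ) (x j) * x j)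
            - ((s:ℂ))⁻¹ * (x i * ∑ j, (starRingEnd ℂ) (y j) * x j)
            + ((s:ℂ)^2)⁻¹ * (c * x i * ∑ j, (starRingEnd ℂ) (x j) * x j) := by
            simp [Finset.sum_add_distrib, Finset.sum_sub_distrib, Finset.mul_sum]
        _ = y i := by
            rw [hsum, hcsum]
            field_simp
            ring
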